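/- Let X be a pure r-dimensional finite simplicial complex that is q-thick (every (r−1)-face is contained in at least q r-faces), equipped with its canonical weight function w (uniform on r-faces, extended downward by averaging). Then for every edge e and vertex x ∈ e, one has w(e)/w(x) ≤ 2/(q + r − 1). Equivalently, |X(r)_{⊇e}| / |X(r)_{⊇x}| ≤ r/(q + r − 1). -/

import Mathlib

open Finset


lemma dc18 {α : Type*} [DecidableEq α] (S T : Finset (Finset α)) :
    ∑ z ∈ S, (T.filter (fun y => z ⊆ y)).card = ∑ y ∈ T, (S.filter (fun z => z ⊆ y)).card := by
  simp only [Finset.card_filter]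
  exact Finset.sum_comm

lemma key18 {V : Type*} [DecidableEq V] (r q : ℕ) (hr : 1 ≤ r)
    (X : Finset (Finset V))
    (hdown : ∀ x ∈ X, ∀ y ⊆ x, y ∈ X)
    (hthick : ∀ x ∈ X, x.card = r →
      q ≤ (X.filter (fun y => y.card = r + 1 ∧ x ⊆ y)).card)
    (e : Finset V) (he : e ∈ X) (hecard : e.card = 2)
    (x : Finset V) (hx : x ⊆ e) (hxcard : x.card = 1) :
    (X.filter (fun y => y.card = r + 1 ∧ e ⊆ y)).card * (q + (r - 1))
      ≤ r * (X.filter (fun y => y.card = r + 1 ∧ x ⊆ y)).card := by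
  classical
  set A := X.filter (fun y => y.card = r + 1 ∧ e ⊆ y) with hA
  set B := X.filter (fun y => y.card = r + 1 ∧ x ⊆ y) with hB
  have hAB : A ⊆ B := by
    intro y hy
    simp only [hA, hB, mem_filter] at *
    exact ⟨hy.1, hy.2.1, hx.trans hy.2.2⟩
  -- the extra vertex of e
  have hvx : (e \ x).card = 1 := by rw [Finset.card_sdiff_of_subset hx, hecard, hxcard]
  obtain ⟨v, hv⟩ := Finset.card_eq_one.mp hvx
  have hvmem : v ∈ e ∧ v ∉ x := by
    have : v ∈ e \ x := hv ▸ Finset.mem_singleton_self v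
    exact ⟨(Finset.mem_sdiff.mp this).1, (Finset.mem_sdiff.mp this).2⟩
  set Z1 := X.filter (fun z => z.card = r ∧ e ⊆ z) with hZ1
  set Z2 := X.filter (fun z => z.card = r ∧ x ⊆ z ∧ ¬ e ⊆ z) with hZ2
  have hdisj : Disjoint Z1 Z2 := by
    rw [Finset.disjoint_left]
    intro z hz1 hz2
    simp only [hZ1, hZ2, mem_filter] at hz1 hz2
    exact hz2.2.2.2 hz1.2.2
  -- lower bound 1 : (r-1) * A.card ≤ ∑ over Z1
  have hsum1 : (r - 1) * A.card ≤ ∑ z ∈ Z1, (B.filter (fun y => z ⊆ y)).card := by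
    rw [dc18]
    calc (r - 1) * A.card = ∑ _y ∈ A, (r - 1) := by
          rw [Finset.sum_const, smul_eq_mul, mul_comm]
      _ ≤ ∑ y ∈ A, (Z1.filter (fun z => z ⊆ y)).card := by
          apply Finset.sum_le_sum
          intro y hy
          simp only [hA, mem_filter] at hy
          obtain ⟨hyX, hycard, hey⟩ := hy
          have hcard : (y \ e).card = r - 1 := by
            rw [Finset.card_sdiff_of_subset hey, hycard, hecard]
            omega
          rw [← hcard]
          apply Finset.card_le_card_of_injOn (fun u => y.erase u)
          · intro u hu
            have hu' := Finset.mem_sdiff.mp hu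
            simp only [Finset.mem_coe, hZ1, mem_filter]
            refine ⟨⟨hdown y hyX _ (Finset.erase_subset _ _),
              ?_, Finset.subset_erase.mpr ⟨hey, hu'.2⟩⟩, Finset.erase_subset _ _⟩
            rw [Finset.card_erase_of_mem hu'.1, hycard]
            omega
          · intro u hu u' hu' heq
            exact (Finset.erase_inj y (Finset.mem_sdiff.mp hu).1).mp heq
      _ ≤ ∑ y ∈ B, (Z1.filter (fun z => z ⊆ y)).card :=
          Finset.sum_le_sum_of_subset hAB
  -- lower bound 2 : q * A.card ≤ ∑ over Z2
  have hZ2A : A.card ≤ Z2.card := by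
    apply Finset.card_le_card_of_injOn (fun y => y.erase v)
    · intro y hy
      simp only [Finset.mem_coe, hA, mem_filter] at hy
      obtain ⟨hyX, hycard, hey⟩ := hy
      have hvy : v ∈ y := hey hvmem.1
      simp only [Finset.mem_coe, hZ2, mem_filter]
      refine ⟨hdown y hyX _ (Finset.erase_subset _ _), ?_,
        Finset.subset_erase.mpr ⟨hx.trans hey, hvmem.2⟩, fun hc => ?_⟩
      · rw [Finset.card_erase_of_mem hvy, hycard]
        omega
      · exact (Finset.notMem_erase v y) (hc hvmem.1)
    · intro y hy y' hy' heq
      simp only [Finset.mem_coe, hA, mem_filter] at hy hy'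
      have h1 : v ∈ y := hy.2.2 hvmem.1
      have h2 : v ∈ y' := hy'.2.2 hvmem.1
      rw [← Finset.insert_erase h1, ← Finset.insert_erase h2]
      exact congrArg (insert v) heq
  have hsum2 : q * A.card ≤ ∑ z ∈ Z2, (B.filter (fun y => z ⊆ y)).card := by
    calc q * A.card ≤ q * Z2.card := Nat.mul_le_mul_left q hZ2A
      _ = ∑ _z ∈ Z2, q := by rw [Finset.sum_const, smul_eq_mul, mul_comm]
      _ ≤ _ := by
          apply Finset.sum_le_sum
          intro z hz
          simp only [hZ2, mem_filter] at hz
          obtain ⟨hzX, hzcard, hxz, _⟩ := hz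
          have heq : X.filter (fun y => y.card = r + 1 ∧ z ⊆ y)
              = B.filter (fun y => z ⊆ y) := by
            ext y
            simp only [hB, mem_filter]
            constructor
            · rintro ⟨h1, h2, h3⟩
              exact ⟨⟨h1, h2, hxz.trans h3⟩, h3⟩
            · rintro ⟨⟨h1, h2, _⟩, h3⟩
              exact ⟨h1, h2, h3⟩
          rw [← heq]
          exact hthick z hzX hzcard
  -- upper bound : ∑ over Z1 ∪ Z2 ≤ r * B.card
  have hsum3 : ∑ z ∈ Z1 ∪ Z2, (B.filter (fun y => z ⊆ y)).card ≤ r * B.card := by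
    rw [dc18]
    calc ∑ y ∈ B, ((Z1 ∪ Z2).filter (fun z => z ⊆ y)).card ≤ ∑ _y ∈ B, r := by
          apply Finset.sum_le_sum
          intro y hy
          simp only [hB, mem_filter] at hy
          obtain ⟨hyX, hycard, hxy⟩ := hy
          have hpc : ((y \ x).powersetCard 1).card = r := by
            rw [Finset.card_powersetCard, Finset.card_sdiff_of_subset hxy, hycard, hxcard]
            simp
          rw [← hpc]
          apply Finset.card_le_card_of_injOn (fun z => y \ z)
          · intro z hz
            simp only [Finset.mem_coe, hZ1, hZ2, Finset.mem_filter, Finset.mem_union] at hz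
            obtain ⟨hz1, hzy⟩ := hz
            have hzcard : z.card = r ∧ x ⊆ z := by
              rcases hz1 with ⟨_, h1, h2⟩ | ⟨_, h1, h2, _⟩
              · exact ⟨h1, hx.trans h2⟩
              · exact ⟨h1, h2⟩
            rw [Finset.mem_coe, Finset.mem_powersetCard]
            constructor
            · exact Finset.sdiff_subset_sdiff (Finset.Subset.refl y) hzcard.2
            · rw [Finset.card_sdiff_of_subset hzy, hycard, hzcard.1]
              omega
          · intro z hz z' hz' heq
            simp only [Finset.mem_coe, Finset.mem_filter] at hz hz'
            have h1 : y \ (y \ z) = z := by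
              rw [Finset.sdiff_sdiff_self_left]
              exact Finset.inter_eq_right.mpr hz.2
            have h2 : y \ (y \ z') = z' := by
              rw [Finset.sdiff_sdiff_self_left]
              exact Finset.inter_eq_right.mpr hz'.2
            rw [← h1, ← h2]
            exact congrArg (y \ ·) heq
      _ = r * B.card := by rw [Finset.sum_const, smul_eq_mul, mul_comm]
  calc A.card * (q + (r - 1)) = q * A.card + (r - 1) * A.card := by ring
    _ ≤ (∑ z ∈ Z2, (B.filter (fun y => z ⊆ y)).card)
        + ∑ z ∈ Z1, (B.filter (fun y => z ⊆ y)).card := Nat.add_le_add hsum2 hsum1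
    _ = ∑ z ∈ Z1 ∪ Z2, (B.filter (fun y => z ⊆ y)).card := by
        rw [Finset.sum_union hdisj, Nat.add_comm]
    _ ≤ r * B.card := hsum3

/-- Let `X` be a pure `r`-dimensional finite simplicial complex that is `q`-thick
(every `(r−1)`-face, i.e. face with `r` vertices, lies in at least `q` faces with
`r+1` vertices), with its canonical weight function
`w(z) = C(r+1, |z|)⁻¹ · |X(r)_{⊇z}| / |X(r)|`. Then for every edge `e` and vertex
face `x ⊆ e`, `w(e)/w(x) ≤ 2/(q+r−1)`; equivalently
`|X(r)_{⊇e}| / |X(r)_{⊇x}| ≤ r/(q+r−1)`. -/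
theorem stmt18 {V : Type*} [Fintype V] [DecidableEq V] (r q : ℕ) (hr : 1 ≤ r)
    (X : Finset (Finset V))
    (hdown : ∀ x ∈ X, ∀ y ⊆ x, y ∈ X)
    (hpure : ∀ x ∈ X, ∃ y ∈ X, x ⊆ y ∧ y.card = r + 1)
    (htop : ∀ y ∈ X, y.card ≤ r + 1)
    (hthick : ∀ x ∈ X, x.card = r →
      q ≤ (X.filter (fun y => y.card = r + 1 ∧ x ⊆ y)).card)
    (e : Finset V) (he : e ∈ X) (hecard : e.card = 2)
    (x : Finset V) (hx : x ⊆ e) (hxcard : x.card = 1) :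
    ((X.filter (fun y => y.card = r + 1 ∧ e ⊆ y)).card : ℝ) * ((q : ℝ) + r - 1)
      ≤ (r : ℝ) * ((X.filter (fun y => y.card = r + 1 ∧ x ⊆ y)).card : ℝ) ∧
    (((r + 1).choose 2 : ℝ)⁻¹ *
        ((X.filter (fun y => y.card = r + 1 ∧ e ⊆ y)).card : ℝ) /
        ((X.filter (fun y => y.card = r + 1)).card : ℝ)) * ((q : ℝ) + r - 1)
      ≤ 2 * (((r + 1).choose 1 : ℝ)⁻¹ *
        ((X.filter (fun y => y.card = r + 1 ∧ x ⊆ y)).card : ℝ) /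
        ((X.filter (fun y => y.card = r + 1)).card : ℝ)) := by
  classical
  have hAsub : X.filter (fun y => y.card = r + 1 ∧ e ⊆ y)
      ⊆ X.filter (fun y => y.card = r + 1) := by
    intro y hy
    simp only [mem_filter] at *
    exact ⟨hy.1, hy.2.1⟩
  have key := key18 r q hr X hdown hthick e he hecard x hx hxcard
  set E := (X.filter (fun y => y.card = r + 1 ∧ e ⊆ y)).card with hE'
  set Bc := (X.filter (fun y => y.card = r + 1 ∧ x ⊆ y)).card with hB'
  set T := (X.filter (fun y => y.card = r + 1)).card with hT'
  have hkeyR : (E : ℝ) * ((q : ℝ) + r - 1) ≤ (r : ℝ) * Bc := by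
    have := (Nat.cast_le (α := ℝ)).mpr key
    push_cast [Nat.cast_sub hr] at this
    linarith
  refine ⟨hkeyR, ?_⟩
  have hc2 : ((r + 1).choose 2 : ℝ) * 2 = (r + 1) * r := by
    have : (r + 1).choose 2 * 2 = (r + 1) * r := by
      rw [Nat.choose_two_right]
      simp only [Nat.add_sub_cancel]
      exact Nat.div_mul_cancel (even_iff_two_dvd.mp
        (by simpa [mul_comm] using Nat.even_mul_succ_self r))
    exact_mod_cast this
  have hc1 : ((r + 1).choose 1 : ℝ) = r + 1 := by
    rw [Nat.choose_one_right]; push_cast; ring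
  rcases Nat.eq_zero_or_pos T with hT | hT
  · have hE : E = 0 := by
      have := Finset.card_le_card hAsub
      omega
    simp [hE, hT, hc1]
  · have hTpos : (0 : ℝ) < T := by exact_mod_cast hT
    have hc2pos : (0 : ℝ) < ((r + 1).choose 2 : ℝ) := by
      have : 0 < (r + 1).choose 2 := Nat.choose_pos (by omega)
      exact_mod_cast this
    have hrpos : (0 : ℝ) < r := by exact_mod_cast hr
    have hr1 : ((r:ℝ)+1) ≠ 0 := by positivity
    have hrne : (r:ℝ) ≠ 0 := ne_of_gt hrpos
    have hTne : (T:ℝ) ≠ 0 := ne_of_gt hTpos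
    have hc2' : ((r+1).choose 2 : ℝ) = ((r:ℝ)+1)*r/2 := by linarith
    have hL : ((r + 1).choose 2 : ℝ)⁻¹ * E / T * ((q:ℝ)+r-1)
        = ((E:ℝ)*((q:ℝ)+r-1)) * (2/(((r:ℝ)+1)*r*T)) := by
      rw [hc2']; field_simp
    have hR : 2 * (((r + 1).choose 1 : ℝ)⁻¹ * Bc / T)
        = ((r:ℝ)*Bc) * (2/(((r:ℝ)+1)*r*T)) := by
      rw [hc1]; field_simp
    rw [hL, hR]
    exact mul_le_mul_of_nonneg_right hkeyR (by positivity)
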